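/- arXiv:2010.04749 — 2 statements merged into one kernel-verified Lean document; each statement's English description precedes it below -/
import Mathlib

section
/- Parallel composition preserves trace inclusion: if traces(Ei', Ii') ⊆ traces(Ei, Ii) for i ∈ {1,2}, then traces(E1' ∥χ E2', I1' × I2') ⊆ traces(E1 ∥χ E2, I1 × I2). -/
/-- Event systems: labeled transition systems. -/
structure ES (S E : Type) where
  trans : S → E → S → Prop

namespace ES

/-- Extension of the transition relation to finite sequences of events. -/
inductive mtrans {S E : Type} (M : ES S E) : S → List E → S → Prop
  | nil (s : S) : mtrans M s [] s
  | snoc {s s' s'' : S} {τ : List E} {e : E} :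
      mtrans M s τ s' → M.trans s' e s'' → mtrans M s (τ ++ [e]) s''

/-- The traces of an event system starting from a set of initial states. -/
def traces {S E : Type} (M : ES S E) (I : Set S) : Set (List E) :=
  {τ | ∃ s ∈ I, ∃ s', M.mtrans s τ s'}

/-- Traces starting from a single state. -/
def tracesFrom {S E : Type} (M : ES S E) (s : S) : Set (List E) :=
  M.traces {s}

end ES

/-- Parallel composition of event systems modulo a partial synchronization
function `χ : E1 × E2 ⇀ E`. -/
def ES.par {S1 E1 S2 E2 E : Type} (M1 : ES S1 E1) (M2 : ES S2 E2)
    (χ : E1 → E2 → Option E) : ES (S1 × S2) E :=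
  ⟨fun s e s' => ∃ e1 e2, χ e1 e2 = some e ∧ M1.trans s.1 e1 s'.1 ∧ M2.trans s.2 e2 s'.2⟩

/-- Composition of trace sets modulo `χ`. -/
def tcomp {E1 E2 E : Type} (χ : E1 → E2 → Option E)
    (T1 : Set (List E1)) (T2 : Set (List E2)) : Set (List E) :=
  {τ | ∃ τ1 ∈ T1, ∃ τ2 ∈ T2, ∃ h1 : τ1.length = τ.length, ∃ h2 : τ2.length = τ.length,
      ∀ i : Fin τ.length,
        χ (τ1.get (Fin.cast h1.symm i)) (τ2.get (Fin.cast h2.symm i)) = some (τ.get i)}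


inductive Sync {E1 E2 E : Type} (χ : E1 → E2 → Option E) :
    List E1 → List E2 → List E → Prop
  | nil : Sync χ [] [] []
  | snoc {τ1 τ2 τ e1 e2 e} : Sync χ τ1 τ2 τ → χ e1 e2 = some e →
      Sync χ (τ1 ++ [e1]) (τ2 ++ [e2]) (τ ++ [e])

lemma ES.mtrans_snoc_inv {S E : Type} {M : ES S E} {s s'' : S} {τ : List E} {e : E}
    (h : M.mtrans s (τ ++ [e]) s'') : ∃ s', M.mtrans s τ s' ∧ M.trans s' e s'' := by
  generalize hL : τ ++ [e] = L at h
  cases h with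
  | nil => simp at hL
  | snoc hm ht =>
    obtain ⟨h1, h2⟩ := List.append_inj' hL rfl
    cases h1; cases (List.singleton_injective h2)
    exact ⟨_, hm, ht⟩

lemma ES.mtrans_nil_inv {S E : Type} {M : ES S E} {s s' : S}
    (h : M.mtrans s [] s') : s' = s := by
  generalize hL : ([] : List E) = L at h
  cases h with
  | nil => rfl
  | snoc hm ht => simp at hL

lemma par_mtrans_decomp {S1 E1 S2 E2 E : Type} {M1 : ES S1 E1} {M2 : ES S2 E2}
    {χ : E1 → E2 → Option E} {p p' : S1 × S2} {τ : List E}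
    (h : (M1.par M2 χ).mtrans p τ p') :
    ∃ τ1 τ2, Sync χ τ1 τ2 τ ∧ M1.mtrans p.1 τ1 p'.1 ∧ M2.mtrans p.2 τ2 p'.2 := by
  induction h with
  | nil => exact ⟨[], [], Sync.nil, ES.mtrans.nil _, ES.mtrans.nil _⟩
  | snoc hm ht ih =>
    obtain ⟨τ1, τ2, hs, hm1, hm2⟩ := ih
    obtain ⟨e1, e2, hχ, ht1, ht2⟩ := ht
    exact ⟨τ1 ++ [e1], τ2 ++ [e2], hs.snoc hχ, hm1.snoc ht1, hm2.snoc ht2⟩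

lemma par_mtrans_comp {S1 E1 S2 E2 E : Type} {M1 : ES S1 E1} {M2 : ES S2 E2}
    {χ : E1 → E2 → Option E} {τ1 τ2 τ} (hs : Sync χ τ1 τ2 τ) :
    ∀ {s1 s1' s2 s2'}, M1.mtrans s1 τ1 s1' → M2.mtrans s2 τ2 s2' →
    (M1.par M2 χ).mtrans (s1, s2) τ (s1', s2') := by
  induction hs with
  | nil =>
    intro s1 s1' s2 s2' h1 h2
    cases ES.mtrans_nil_inv h1; cases ES.mtrans_nil_inv h2; exact ES.mtrans.nil _
  | snoc hs hχ ih =>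
    intro s1 s1' s2 s2' h1 h2
    obtain ⟨t1, hm1, ht1⟩ := ES.mtrans_snoc_inv h1
    obtain ⟨t2, hm2, ht2⟩ := ES.mtrans_snoc_inv h2
    exact (ih hm1 hm2).snoc ⟨_, _, hχ, ht1, ht2⟩

/-- Compositional refinement: parallel composition preserves trace inclusion. -/
theorem compositional_refinement {S1 E1 S2 E2 S1' S2' E : Type}
    (M1 : ES S1 E1) (M2 : ES S2 E2) (M1' : ES S1' E1) (M2' : ES S2' E2)
    (I1 : Set S1) (I2 : Set S2) (I1' : Set S1') (I2' : Set S2')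
    (χ : E1 → E2 → Option E)
    (h1 : M1'.traces I1' ⊆ M1.traces I1) (h2 : M2'.traces I2' ⊆ M2.traces I2) :
    (M1'.par M2' χ).traces (I1' ×ˢ I2') ⊆ (M1.par M2 χ).traces (I1 ×ˢ I2) := by
  rintro τ ⟨⟨s1, s2⟩, ⟨hs1, hs2⟩, ⟨t1, t2⟩, hm⟩
  obtain ⟨τ1, τ2, hs, hm1, hm2⟩ := par_mtrans_decomp hm
  obtain ⟨u1, hu1, u1', hmu1⟩ := h1 ⟨s1, hs1, t1, hm1⟩
  obtain ⟨u2, hu2, u2', hmu2⟩ := h2 ⟨s2, hs2, t2, hm2⟩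
  exact ⟨(u1, u2), ⟨hu1, hu2⟩, (u1', u2'), par_mtrans_comp hs hmu1 hmu2⟩
end

section
/- The simulation relation R(P, ho) defined by 'either ho = {token(t)} + h for some place t and heap h with h ⊨ emb(P, t), or ho = ⊥' is a forward simulation from the process operational semantics to the heap transition semantics: if R(P, ho) and P →a P', then there exists ho' with ho →a ho' and R(P', ho'). -/
/-! ## Chunks and heaps -/

/-- Chunks: I/O permissions `bio(t, v, w, t')` and tokens `token(t)`. -/
inductive Chunk (B V Pl : Type) : Type
  | bio (b : B) (t : Pl) (v w : V) (t' : Pl)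
  | token (t : Pl)

/-- Heaps are (possibly infinite) multisets of chunks, i.e. functions to `ℕ∞`. -/
abbrev Heap (B V Pl : Type) := Chunk B V Pl → ℕ∞

open Classical in
/-- The singleton heap containing one chunk. -/
noncomputable def Heap.single {B V Pl : Type} (c : Chunk B V Pl) : Heap B V Pl :=
  fun c' => if c' = c then 1 else 0

/-- Well-typedness of a chunk w.r.t. a typing function `Ty`. -/
def Chunk.wellTyped {B V Pl : Type} (Ty : B → V → Set V) : Chunk B V Pl → Prop
  | .bio b _ v w _ => w ∈ Ty b v
  | .token _ => True

/-! ## Assertions (coinductive, as an M-type) -/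

/-- Heads of the assertion functor. -/
inductive AssnHead (B V Pl : Type) : Type
  | bool (b : Bool)
  | chunk (c : Chunk B V Pl)
  | star
  | exv
  | expl

/-- Arities (branching types) of the assertion functor. -/
def AssnAr (B V Pl : Type) : AssnHead B V Pl → Type
  | .bool _ => Empty
  | .chunk _ => Empty
  | .star => Bool
  | .exv => V
  | .expl => Pl

/-- The assertion polynomial functor. -/
def AssnF (B V Pl : Type) : PFunctor := ⟨AssnHead B V Pl, AssnAr B V Pl⟩

/-- Coinductive separation logic assertions:
`φ ::=ν b | c | φ₁ ⋆ φ₂ | ∃v. φ | ∃t. φ`. -/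
def Assn (B V Pl : Type) : Type := (AssnF B V Pl).M

namespace Assn

variable {B V Pl : Type}

/-- Boolean assertion. -/
def mkBool (b : Bool) : Assn B V Pl := PFunctor.M.mk ⟨.bool b, fun e => e.elim⟩

/-- Chunk assertion. -/
def mkChunk (c : Chunk B V Pl) : Assn B V Pl := PFunctor.M.mk ⟨.chunk c, fun e => e.elim⟩

/-- Separating conjunction. -/
def star (φ ψ : Assn B V Pl) : Assn B V Pl :=
  PFunctor.M.mk ⟨.star, fun x : Bool => if x then φ else ψ⟩

/-- Existential quantification over values. -/
def exv (f : V → Assn B V Pl) : Assn B V Pl := PFunctor.M.mk ⟨.exv, f⟩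

/-- Existential quantification over places. -/
def expl (f : Pl → Assn B V Pl) : Assn B V Pl := PFunctor.M.mk ⟨.expl, f⟩

end Assn

/-- One step of the satisfaction relation. -/
def SatF {B V Pl : Type} (Ty : B → V → Set V)
    (R : Heap B V Pl → Assn B V Pl → Prop) (h : Heap B V Pl) (φ : Assn B V Pl) : Prop :=
  match PFunctor.M.dest φ with
  | ⟨.bool b, _⟩ => b = true
  | ⟨.chunk c, _⟩ => 0 < h c ∧ c.wellTyped Ty
  | ⟨.star, f⟩ => ∃ h1 h2, h = h1 + h2 ∧ R h1 (f true) ∧ R h2 (f false)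
  | ⟨.exv, f⟩ => ∃ v, R h (f v)
  | ⟨.expl, f⟩ => ∃ t, R h (f t)

/-- Coinductive satisfaction relation `h ⊨ φ`, as the greatest fixed point
of `SatF` (defined as the union of all post-fixed points). -/
def sat {B V Pl : Type} (Ty : B → V → Set V) (h : Heap B V Pl) (φ : Assn B V Pl) : Prop :=
  ∃ R, (∀ h' φ', R h' φ' → SatF Ty R h' φ') ∧ R h φ

/-! ## Heap transition system -/

/-- The heap transition system over `Option Heap` (`none` is the chaotic state ⊥),
with rules Bio, Contradict, and Chaos. -/
inductive HTrans {B V Pl : Type} (Ty : B → V → Set V) :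
    Option (Heap B V Pl) → B × V × V → Option (Heap B V Pl) → Prop
  | bio {b : B} {v w : V} {t t' : Pl} {h : Heap B V Pl} :
      w ∈ Ty b v →
      HTrans Ty (some (Heap.single (.token t) + Heap.single (.bio b t v w t') + h)) (b, v, w)
        (some (Heap.single (.token t') + h))
  | contradict {b : B} {v w w' : V} {t t' : Pl} {h : Heap B V Pl} :
      w ≠ w' → w ∈ Ty b v → w' ∈ Ty b v →
      HTrans Ty (some (Heap.single (.token t) + Heap.single (.bio b t v w t') + h)) (b, v, w')
        none
  | chaos {b : B} {v w : V} : w ∈ Ty b v → HTrans Ty none (b, v, w) none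

/-- The heap transition system as an event system. -/
def hES {B V Pl : Type} (Ty : B → V → Set V) : ES (Option (Heap B V Pl)) (B × V × V) :=
  ⟨HTrans Ty⟩

/-- Traces executable in all heaps of a set of heaps. -/
def tracesH {B V Pl : Type} (Ty : B → V → Set V) (H : Set (Heap B V Pl)) :
    Set (List (B × V × V)) :=
  {τ | ∀ h ∈ H, τ ∈ (hES Ty).tracesFrom (some h)}

/-- Traces of an assertion: traces executable in all its heap models. -/
def tracesHA {B V Pl : Type} (Ty : B → V → Set V) (φ : Assn B V Pl) :
    Set (List (B × V × V)) :=
  tracesH Ty {h | sat Ty h φ}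

/-! ## Processes (coinductive, as an M-type) -/

/-- Heads of the process functor. -/
inductive ProcHead (B V : Type) : Type
  | null
  | pre (b : B) (v : V)
  | choice

/-- Arities of the process functor. -/
def ProcAr (B V : Type) : ProcHead B V → Type
  | .null => Empty
  | .pre _ _ => V
  | .choice => Bool

/-- The process polynomial functor. -/
def ProcF (B V : Type) : PFunctor := ⟨ProcHead B V, ProcAr B V⟩

/-- Coinductive processes: `P ::=ν Null | bio(v, z).P | P₁ ⊕ P₂`. -/
def Proc (B V : Type) : Type := (ProcF B V).M

namespace Proc

variable {B V : Type}

/-- The inactive process. -/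
def null : Proc B V := PFunctor.M.mk ⟨.null, fun e => e.elim⟩

/-- Prefixing with an I/O operation, binding the input in the continuation. -/
def pre (b : B) (v : V) (k : V → Proc B V) : Proc B V := PFunctor.M.mk ⟨.pre b v, k⟩

/-- Binary choice. -/
def choice (P Q : Proc B V) : Proc B V :=
  PFunctor.M.mk ⟨.choice, fun x : Bool => if x then P else Q⟩

end Proc

/-- Operational semantics of processes (rules Pref and Choice). -/
inductive PTrans {B V : Type} (Ty : B → V → Set V) : Proc B V → B × V × V → Proc B V → Prop
  | pref {P : Proc B V} {b : B} {v w : V} {k : V → Proc B V} :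
      w ∈ Ty b v → PFunctor.M.dest P = ⟨.pre b v, k⟩ → PTrans Ty P (b, v, w) (k w)
  | chl {P P' : Proc B V} {a : B × V × V} {f : Bool → Proc B V} :
      PFunctor.M.dest P = ⟨.choice, f⟩ → PTrans Ty (f true) a P' → PTrans Ty P a P'
  | chr {P P' : Proc B V} {a : B × V × V} {f : Bool → Proc B V} :
      PFunctor.M.dest P = ⟨.choice, f⟩ → PTrans Ty (f false) a P' → PTrans Ty P a P'

/-- The process operational semantics as an event system. -/
def pES {B V : Type} (Ty : B → V → Set V) : ES (Proc B V) (B × V × V) := ⟨PTrans Ty⟩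

/-- Countable (ℕ-indexed) choice, defined corecursively from binary choice. -/
def vchoice {B V : Type} (f : ℕ → Proc B V) : Proc B V :=
  PFunctor.M.corec
    (fun s : Proc B V ⊕ ℕ =>
      match s with
      | .inl p => ⟨(PFunctor.M.dest p).1, fun x => Sum.inl ((PFunctor.M.dest p).2 x)⟩
      | .inr n => ⟨.choice, fun x : Bool => if x then Sum.inl (f n) else Sum.inr (n + 1)⟩)
    (Sum.inr 0)

/-! ## Embedding of processes into assertions -/

/-- States of the corecursion defining the embedding `emb`. -/
inductive EmbSt (B V Pl : Type) : Type
  | proc (P : Proc B V) (t : Pl)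
  | ex1 (b : B) (v : V) (k : V → Proc B V) (t t' : Pl)
  | star1 (b : B) (v : V) (k : V → Proc B V) (t t' : Pl) (z : V)
  | leafChunk (c : Chunk B V Pl)

/-- One step of the corecursion defining the embedding `emb`. -/
def embStep {B V Pl : Type} : EmbSt B V Pl → (AssnF B V Pl).Obj (EmbSt B V Pl)
  | .proc P t =>
    match PFunctor.M.dest P with
    | ⟨.null, _⟩ => ⟨.bool true, fun e => e.elim⟩
    | ⟨.pre b v, k⟩ => ⟨.expl, fun t' => .ex1 b v k t t'⟩
    | ⟨.choice, f⟩ => ⟨.star, fun x : Bool => .proc (f x) t⟩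
  | .ex1 b v k t t' => ⟨.exv, fun z => .star1 b v k t t' z⟩
  | .star1 b v k t t' z =>
      ⟨.star, fun x : Bool => if x then .leafChunk (.bio b t v z t') else .proc (k z) t'⟩
  | .leafChunk c => ⟨.chunk c, fun e => e.elim⟩

/-- The embedding `emb(P, t)` of a process and a place into an assertion:
`emb(Null, t) = true`, `emb(bio(v,z).P, t) = ∃t',z'. bio(t,v,z',t') ⋆ emb(P[z'/z], t')`,
`emb(P₁ ⊕ P₂, t) = emb(P₁, t) ⋆ emb(P₂, t)`. -/
def embA {B V Pl : Type} (P : Proc B V) (t : Pl) : Assn B V Pl :=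
  PFunctor.M.corec embStep (.proc P t)

/-- The process assertion `emb(P) = ∃t. token(t) ⋆ emb(P, t)`. -/
def procAssn {B V : Type} (Pl : Type) (P : Proc B V) : Assn B V Pl :=
  Assn.expl (fun t => Assn.star (Assn.mkChunk (.token t)) (embA P t))

/-- ℕ-indexed iterated separating conjunction, defined corecursively. -/
def AllStar {B V Pl : Type} (f : ℕ → Assn B V Pl) : Assn B V Pl :=
  PFunctor.M.corec
    (fun s : Assn B V Pl ⊕ ℕ =>
      match s with
      | .inl a => ⟨(PFunctor.M.dest a).1, fun x => Sum.inl ((PFunctor.M.dest a).2 x)⟩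
      | .inr n => ⟨.star, fun x : Bool => if x then Sum.inl (f n) else Sum.inr (n + 1)⟩)
    (Sum.inr 0)

/-! ## I/O-guarded event systems and their translation to processes -/

/-- An I/O-guarded event system: guards depend only on the state and the output,
updates compute the next state from output and input. -/
structure IOGES (B V S : Type) where
  guard : B → V → S → Prop
  update : B → V → V → S → S

/-- The event system associated with an I/O-guarded event system:
`s →bio(v,w) s'` iff the guard holds, `w ∈ Ty(bio, v)`, and `s' = U(s)`. -/
def IOGES.es {B V S : Type} (G : IOGES B V S) (Ty : B → V → Set V) : ES S (B × V × V) :=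
  ⟨fun s a s' => G.guard a.1 a.2.1 s ∧ a.2.2 ∈ Ty a.1 a.2.1 ∧
      s' = G.update a.1 a.2.1 a.2.2 s⟩

/-- States of the corecursion defining `proc(G, s)`. -/
inductive PrSt (S : Type) : Type
  | spine (n : ℕ) (s : S)
  | item (n : ℕ) (s : S)

open Classical in
/-- The corecursive translation `proc(G, s)` of an I/O-guarded event system into
a process: the countable choice over all `bio ∈ Bios` and outputs `v` whose guard
holds in `s` of the prefixed processes `bio(v, z). proc(G, U_{bio(v,z)}(s))`,
via an enumeration `e` of the pairs `(bio, v)`. -/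
noncomputable def procOf {B V S : Type} (e : ℕ → B × V) (G : IOGES B V S) (s : S) :
    Proc B V :=
  PFunctor.M.corec
    (fun st : PrSt S =>
      match st with
      | .spine n s => ⟨.choice, fun x : Bool => if x then .item n s else .spine (n + 1) s⟩
      | .item n s =>
          if G.guard (e n).1 (e n).2 s then
            ⟨.pre (e n).1 (e n).2, fun w => .spine 0 (G.update (e n).1 (e n).2 w s)⟩
          else ⟨.null, fun x => x.elim⟩)
    (.spine 0 s)

/-! ## Canonical heap models -/

open Classical in
/-- The I/O permission (as a singleton heap, or the empty heap) found at position
`pos` of process `P` under input schedule `ρ`, with previous place `pp`,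
current position `cp`, and traversed trace `τ`. -/
noncomputable def pm {B V : Type} (ρ : List (B × V × V) → B → V → V) :
    Proc B V → List (B × V × V) → List Bool → List Bool → List Bool →
      Heap B V (List Bool)
  | P, τ, pp, cp, [] =>
    (match PFunctor.M.dest P with
     | ⟨.pre b v, _⟩ => Heap.single (Chunk.bio b pp v (ρ τ b v) (cp ++ [true]))
     | _ => 0)
  | P, τ, pp, cp, d :: pos =>
    (match PFunctor.M.dest P, d with
     | ⟨.pre b v, k⟩, true =>
         pm ρ (k (ρ τ b v)) (τ ++ [(b, v, ρ τ b v)]) (cp ++ [true]) (cp ++ [true]) pos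
     | ⟨.choice, f⟩, d' => pm ρ (f d') τ pp (cp ++ [d']) pos
     | _, _ => 0)

/-- Pointwise (possibly infinite) sum of a family of heaps. -/
noncomputable def hSum {B V Pl ι : Type} (f : ι → Heap B V Pl) : Heap B V Pl :=
  fun c => ⨆ F : Finset ι, ∑ i ∈ F, f i c

/-- The canonical model construction `gmod(P, ρ, τ, ppos, cpos)`: the multiset
sum of `pm(P, ρ, τ, ppos, cpos, pos)` over all positions `pos`. -/
noncomputable def gmod {B V : Type} (ρ : List (B × V × V) → B → V → V)
    (P : Proc B V) (τ : List (B × V × V)) (pp cp : List Bool) :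
    Heap B V (List Bool) :=
  hSum (fun pos : List Bool => pm ρ P τ pp cp pos)

/-- Well-typedness of an input schedule. -/
def schedWT {B V : Type} (Ty : B → V → Set V) (ρ : List (B × V × V) → B → V → V) : Prop :=
  ∀ τ b v, ρ τ b v ∈ Ty b v

/-- The canonical model `cmod(P, ρ) = gmod(P, ρ, [], [], [])`. -/
noncomputable def cmod {B V : Type} (ρ : List (B × V × V) → B → V → V) (P : Proc B V) :
    Heap B V (List Bool) :=
  gmod ρ P [] [] []

/-- The canonical model with a token added at the previous place. -/
noncomputable def gmodTok {B V : Type} (ρ : List (B × V × V) → B → V → V)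
    (P : Proc B V) (τ : List (B × V × V)) (pp cp : List Bool) :
    Heap B V (List Bool) :=
  Heap.single (Chunk.token pp) + gmod ρ P τ pp cp

/-- The set `can(P)` of token-added canonical models over all well-typed schedules. -/
def canSet {B V : Type} (Ty : B → V → Set V) (P : Proc B V) :
    Set (Heap B V (List Bool)) :=
  {h | ∃ ρ, schedWT Ty ρ ∧ h = Heap.single (Chunk.token []) + cmod ρ P}

/-- The set of source places of I/O permissions in a heap. -/
def srcplaces {B V Pl : Type} (h : Heap B V Pl) : Set Pl :=
  {t | ∃ b v w t', 0 < h (Chunk.bio b t v w t')}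

/-- A heap is dead for a position if it has no tokens and no source place
extending the position. -/
def deadFor {B V : Type} (pos : List Bool) (h : Heap B V (List Bool)) : Prop :=
  (∀ t, h (Chunk.token t) = 0) ∧ ∀ p' ∈ srcplaces h, ¬ pos <+: p'

open Classical in
/-- The witness schedule `ρwit(σ)`: for proper prefixes `τ` of `σ`, return the
input of the next matching action of `σ`; otherwise an arbitrary well-typed value
(given by `pick`). -/
noncomputable def rhoWit {B V : Type} (pick : B → V → V) (σ : List (B × V × V)) :
    List (B × V × V) → B → V → V :=
  fun τ b v =>
    if h : ∃ w, ∃ rest, τ <+: σ ∧ σ.drop τ.length = (b, v, w) :: rest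
    then h.choose
    else pick b v

/-- The simulation relation between processes and heap-transition states:
either the state is a heap with a token at a place `t` plus a model of
`emb(P, t)`, or it is the chaotic state ⊥. -/
def simR {B V Pl : Type} (Ty : B → V → Set V) (P : Proc B V)
    (ho : Option (Heap B V Pl)) : Prop :=
  (∃ (t : Pl) (h : Heap B V Pl),
      ho = some (Heap.single (Chunk.token t) + h) ∧ sat Ty h (embA P t)) ∨
  ho = none

section SimAux

variable {B V Pl : Type} {Ty : B → V → Set V}

theorem satF_mono {R R' : Heap B V Pl → Assn B V Pl → Prop}
    (hRR : ∀ h φ, R h φ → R' h φ) {h : Heap B V Pl} {φ : Assn B V Pl}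
    (hs : SatF Ty R h φ) : SatF Ty R' h φ := by
  unfold SatF at *
  rcases hd : PFunctor.M.dest φ with ⟨hdh, f⟩
  rw [hd] at hs
  cases hdh with
  | bool b => exact hs
  | chunk c => exact hs
  | star =>
    obtain ⟨h1, h2, he, h1s, h2s⟩ := hs
    exact ⟨h1, h2, he, hRR _ _ h1s, hRR _ _ h2s⟩
  | exv => obtain ⟨v, hv⟩ := hs; exact ⟨v, hRR _ _ hv⟩
  | expl => obtain ⟨t, ht⟩ := hs; exact ⟨t, hRR _ _ ht⟩

theorem sat_unfold {h : Heap B V Pl} {φ : Assn B V Pl}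
    (hs : sat Ty h φ) : SatF Ty (sat Ty) h φ := by
  obtain ⟨S, hS, hSh⟩ := hs
  exact satF_mono (fun h' φ' hs' => ⟨S, hS, hs'⟩) (hS _ _ hSh)

theorem sat_mono {h he : Heap B V Pl} {φ : Assn B V Pl}
    (hs : sat Ty h φ) : sat Ty (he + h) φ := by
  refine ⟨fun h' φ' => ∃ h0 he0, h' = he0 + h0 ∧ sat Ty h0 φ', ?_, h, he, rfl, hs⟩
  rintro h' φ' ⟨h0, he0, rfl, hs0⟩
  have hs0' := sat_unfold hs0
  unfold SatF at *
  rcases hd : PFunctor.M.dest φ' with ⟨hdh, f⟩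
  rw [hd] at hs0'
  cases hdh with
  | bool b => exact hs0'
  | chunk c =>
    refine ⟨lt_of_lt_of_le hs0'.1 ?_, hs0'.2⟩
    show h0 c ≤ he0 c + h0 c
    exact le_add_self
  | star =>
    obtain ⟨h1, h2, he', h1s, h2s⟩ := hs0'
    exact ⟨he0 + h1, h2, by rw [he', ← add_assoc], ⟨h1, he0, rfl, h1s⟩,
      ⟨h2, 0, (zero_add _).symm, h2s⟩⟩
  | exv => obtain ⟨v, hv⟩ := hs0'; exact ⟨v, h0, he0, rfl, hv⟩
  | expl => obtain ⟨t, ht⟩ := hs0'; exact ⟨t, h0, he0, rfl, ht⟩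

theorem sat_dest_expl {h : Heap B V Pl} {φ : Assn B V Pl} {f : Pl → Assn B V Pl}
    (hd : PFunctor.M.dest φ = ⟨.expl, f⟩) (hs : sat Ty h φ) : ∃ t, sat Ty h (f t) := by
  have := sat_unfold hs
  unfold SatF at this; rw [hd] at this; exact this

theorem sat_dest_exv {h : Heap B V Pl} {φ : Assn B V Pl} {f : V → Assn B V Pl}
    (hd : PFunctor.M.dest φ = ⟨.exv, f⟩) (hs : sat Ty h φ) : ∃ v, sat Ty h (f v) := by
  have := sat_unfold hs
  unfold SatF at this; rw [hd] at this; exact this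

theorem sat_dest_star {h : Heap B V Pl} {φ : Assn B V Pl} {f : Bool → Assn B V Pl}
    (hd : PFunctor.M.dest φ = ⟨.star, f⟩) (hs : sat Ty h φ) :
    ∃ h1 h2, h = h1 + h2 ∧ sat Ty h1 (f true) ∧ sat Ty h2 (f false) := by
  have := sat_unfold hs
  unfold SatF at this; rw [hd] at this; exact this

theorem sat_dest_chunk {h : Heap B V Pl} {φ : Assn B V Pl} {c : Chunk B V Pl}
    {f : Empty → Assn B V Pl}
    (hd : PFunctor.M.dest φ = ⟨.chunk c, f⟩) (hs : sat Ty h φ) :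
    0 < h c ∧ c.wellTyped Ty := by
  have := sat_unfold hs
  unfold SatF at this; rw [hd] at this; exact this

theorem dest_embA_pre {P : Proc B V} {b : B} {v : V} {k : V → Proc B V} {t : Pl}
    (hd : PFunctor.M.dest P = ⟨.pre b v, k⟩) :
    PFunctor.M.dest (embA (Pl := Pl) P t) =
      ⟨.expl, fun t' => PFunctor.M.corec embStep (.ex1 b v k t t')⟩ := by
  rw [embA, PFunctor.M.dest_corec]
  show PFunctor.map _ _ (embStep (.proc P t)) = _
  simp only [embStep]
  rw [hd]
  rfl

theorem dest_ex1 {b : B} {v : V} {k : V → Proc B V} {t t' : Pl} :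
    PFunctor.M.dest (PFunctor.M.corec (embStep (B := B) (V := V) (Pl := Pl))
        (.ex1 b v k t t')) =
      ⟨.exv, fun z => PFunctor.M.corec embStep (.star1 b v k t t' z)⟩ := by
  rw [PFunctor.M.dest_corec]; rfl

theorem dest_star1 {b : B} {v : V} {k : V → Proc B V} {t t' : Pl} {z : V} :
    PFunctor.M.dest (PFunctor.M.corec (embStep (B := B) (V := V) (Pl := Pl))
        (.star1 b v k t t' z)) =
      ⟨.star, fun x : Bool => PFunctor.M.corec embStep
        (if x then .leafChunk (.bio b t v z t') else .proc (k z) t')⟩ := by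
  rw [PFunctor.M.dest_corec]; rfl

theorem dest_leaf {c : Chunk B V Pl} :
    PFunctor.M.dest (PFunctor.M.corec (embStep (B := B) (V := V) (Pl := Pl))
        (.leafChunk c)) =
      ⟨.chunk c, fun e => (PFunctor.M.corec embStep ∘ Empty.elim) e⟩ := by
  rw [PFunctor.M.dest_corec]; rfl

theorem dest_embA_choice {P : Proc B V} {f : Bool → Proc B V} {t : Pl}
    (hd : PFunctor.M.dest P = ⟨.choice, f⟩) :
    PFunctor.M.dest (embA (Pl := Pl) P t) =
      ⟨.star, fun x : Bool => embA (f x) t⟩ := by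
  rw [embA, PFunctor.M.dest_corec]
  show PFunctor.map _ _ (embStep (.proc P t)) = _
  simp only [embStep]
  rw [hd]
  rfl

theorem htrans_frame_some {h0 h1 : Heap B V Pl} {a : B × V × V}
    (ht : HTrans Ty (some h0) a (some h1)) (hf : Heap B V Pl) :
    HTrans Ty (some (h0 + hf)) a (some (h1 + hf)) := by
  cases ht with
  | bio hw =>
    rename_i b v w t t' hmid
    have := HTrans.bio (Ty := Ty) (t := t) (t' := t') (h := hmid + hf) hw
    simpa [add_assoc] using this

theorem htrans_frame_none {h0 : Heap B V Pl} {a : B × V × V}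
    (ht : HTrans Ty (some h0) a none) (hf : Heap B V Pl) :
    HTrans Ty (some (h0 + hf)) a none := by
  cases ht with
  | contradict hne hw hw' =>
    rename_i b v w w' t t' hmid
    have := HTrans.contradict (Ty := Ty) (t := t) (t' := t') (h := hmid + hf) hne hw hw'
    simpa [add_assoc] using this

theorem ptrans_ty {P P' : Proc B V} {a : B × V × V}
    (h : PTrans Ty P a P') : a.2.2 ∈ Ty a.1 a.2.1 := by
  induction h with
  | pref hw _ => exact hw
  | chl _ _ ih => exact ih
  | chr _ _ ih => exact ih

theorem sim_main {P P' : Proc B V} {a : B × V × V}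
    (hstep : PTrans Ty P a P') :
    ∀ (t : Pl) (h : Heap B V Pl), sat Ty h (embA P t) →
      ∃ ho', HTrans Ty (some (Heap.single (Chunk.token t) + h)) a ho' ∧ simR Ty P' ho' := by
  induction hstep with
  | @pref P b v w k hw hd =>
    intro t h hs
    obtain ⟨t', hs⟩ := sat_dest_expl (dest_embA_pre hd) hs
    obtain ⟨z, hs⟩ := sat_dest_exv dest_ex1 hs
    obtain ⟨h1, h2, heq, hs1, hs2⟩ := sat_dest_star dest_star1 hs
    have hs1' : sat Ty h1
        (PFunctor.M.corec embStep (.leafChunk (Chunk.bio b t v z t'))) := hs1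
    have hs2' : sat Ty h2 (embA (k z) t') := hs2
    obtain ⟨hpos, hwt⟩ := sat_dest_chunk dest_leaf hs1'
    have hwtz : z ∈ Ty b v := hwt
    -- decompose h1 = single c + h1'
    classical
    have hdec : ∃ h1' : Heap B V Pl,
        h1 = Heap.single (Chunk.bio b t v z t') + h1' := by
      refine ⟨fun c' => if c' = Chunk.bio b t v z t' then h1 c' - 1 else h1 c', ?_⟩
      funext c'
      show h1 c' = Heap.single _ c' + _
      by_cases hcc : c' = Chunk.bio b t v z t'
      · subst hcc
        simp only [Heap.single, if_pos rfl]
        have h1le : (1 : ℕ∞) ≤ h1 (Chunk.bio b t v z t') :=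
          ENat.one_le_iff_ne_zero.mpr hpos.ne'
        exact (add_tsub_cancel_of_le h1le).symm
      · simp only [Heap.single, if_neg hcc]
        exact (zero_add _).symm
    obtain ⟨h1', hdec⟩ := hdec
    have hsplit : Heap.single (Chunk.token t) + h =
        Heap.single (Chunk.token t) + Heap.single (Chunk.bio b t v z t') + (h1' + h2) := by
      rw [heq, hdec]
      abel
    by_cases hzw : z = w
    · subst hzw
      refine ⟨some (Heap.single (Chunk.token t') + (h1' + h2)), ?_, ?_⟩
      · rw [hsplit]
        exact HTrans.bio hw
      · exact Or.inl ⟨t', h1' + h2, rfl, sat_mono hs2'⟩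
    · refine ⟨none, ?_, Or.inr rfl⟩
      rw [hsplit]
      exact HTrans.contradict hzw hwtz hw
  | @chl P P' a f hdch hsub ih =>
    intro t h hs
    obtain ⟨h1, h2, heq, hs1, hs2⟩ := sat_dest_star (dest_embA_choice hdch) hs
    obtain ⟨ho', hht, hsim⟩ := ih t h1 hs1
    have heq2 : Heap.single (Chunk.token t) + h =
        (Heap.single (Chunk.token t) + h1) + h2 := by rw [heq]; abel
    rcases ho' with _ | h1''
    · exact ⟨none, by rw [heq2]; exact htrans_frame_none hht h2, Or.inr rfl⟩
    · rcases hsim with ⟨t'', hh, heq3, hsat⟩ | hnone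
      · injection heq3 with heq3
        refine ⟨some (h1'' + h2), by rw [heq2]; exact htrans_frame_some hht h2, ?_⟩
        refine Or.inl ⟨t'', h2 + hh, ?_, sat_mono hsat⟩
        rw [heq3]; congr 1; abel
      · exact absurd hnone (by simp)
  | @chr P P' a f hdch hsub ih =>
    intro t h hs
    obtain ⟨h1, h2, heq, hs1, hs2⟩ := sat_dest_star (dest_embA_choice hdch) hs
    obtain ⟨ho', hht, hsim⟩ := ih t h2 hs2
    have heq2 : Heap.single (Chunk.token t) + h =
        (Heap.single (Chunk.token t) + h2) + h1 := by rw [heq]; abel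
    rcases ho' with _ | h1''
    · exact ⟨none, by rw [heq2]; exact htrans_frame_none hht h1, Or.inr rfl⟩
    · rcases hsim with ⟨t'', hh, heq3, hsat⟩ | hnone
      · injection heq3 with heq3
        refine ⟨some (h1'' + h1), by rw [heq2]; exact htrans_frame_some hht h1, ?_⟩
        refine Or.inl ⟨t'', h1 + hh, ?_, sat_mono hsat⟩
        rw [heq3]; congr 1; abel
      · exact absurd hnone (by simp)

end SimAux

/-- `simR` is a forward simulation from the process operational semantics to
the heap transition semantics. -/
theorem simR_forward_simulation {B V Pl : Type} (Ty : B → V → Set V)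
    (P P' : Proc B V) (a : B × V × V) (ho : Option (Heap B V Pl))
    (hR : simR Ty P ho) (hstep : PTrans Ty P a P') :
    ∃ ho', HTrans Ty ho a ho' ∧ simR Ty P' ho' := by
  rcases hR with ⟨t, h, rfl, hs⟩ | rfl
  · exact sim_main hstep t h hs
  · obtain ⟨b, v, w⟩ := a
    exact ⟨none, HTrans.chaos (ptrans_ty hstep), Or.inr rfl⟩
end
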